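/- If A is a simple algebra (A·A ≠ 0 and the only ideals of A are 0 and A), then the centroid C(A) is a field. -/
import Mathlib


/-- A two-sided ideal of a (not necessarily associative) algebra. -/
def IsAlgIdeal (K A : Type*) [CommRing K] [NonUnitalNonAssocRing A] [Module K A]
    (I : Submodule K A) : Prop :=
  ∀ (a : A), ∀ x ∈ I, a * x ∈ I ∧ x * a ∈ I

/-- A centroidal transformation. -/
def IsCentroidal (K A : Type*) [CommRing K] [NonUnitalNonAssocRing A] [Module K A]
    (χ : Module.End K A) : Prop :=
  ∀ a b : A, χ (a * b) = a * χ b ∧ χ (a * b) = χ a * b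

/-- If `A` is a simple algebra (`A·A ≠ 0` and the only ideals are `0` and `A`),
then its centroid is a field: a nontrivial commutative ring in which every
nonzero element is invertible. -/
theorem centroid_isField_of_simple
    (K A : Type*) [CommRing K] [NonUnitalNonAssocRing A] [Module K A]
    [SMulCommClass K A A] [IsScalarTower K A A]
    (hAA : ∃ a b : A, a * b ≠ 0)
    (hsimple : ∀ I : Submodule K A, IsAlgIdeal K A I → I = ⊥ ∨ I = ⊤) :
    ((1 : Module.End K A) ≠ 0) ∧
    (∀ χ ψ : Module.End K A, IsCentroidal K A χ → IsCentroidal K A ψ → χ * ψ = ψ * χ) ∧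
    (∀ χ : Module.End K A, IsCentroidal K A χ → χ ≠ 0 →
      ∃ ψ : Module.End K A, IsCentroidal K A ψ ∧ χ * ψ = 1 ∧ ψ * χ = 1) := by
  obtain ⟨a₀, b₀, hab⟩ := hAA
  -- the span of products is an ideal, nonzero, hence ⊤
  set S : Set A := {x | ∃ a b : A, x = a * b} with hS
  have hIdeal : IsAlgIdeal K A (Submodule.span K S) := by
    intro a x hx
    constructor
    · induction hx using Submodule.span_induction with
      | mem y hy =>
        obtain ⟨c, d, rfl⟩ := hy
        exact Submodule.subset_span ⟨a, c * d, rfl⟩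
      | zero => simpa using (Submodule.span K S).zero_mem
      | add y z _ _ hy hz => simpa [mul_add] using Submodule.add_mem _ hy hz
      | smul k y _ hy => simpa [mul_smul_comm] using Submodule.smul_mem _ k hy
    · induction hx using Submodule.span_induction with
      | mem y hy =>
        obtain ⟨c, d, rfl⟩ := hy
        exact Submodule.subset_span ⟨c * d, a, rfl⟩
      | zero => simpa using (Submodule.span K S).zero_mem
      | add y z _ _ hy hz => simpa [add_mul] using Submodule.add_mem _ hy hz
      | smul k y _ hy => simpa [smul_mul_assoc] using Submodule.smul_mem _ k hy
  have hspan : Submodule.span K S = ⊤ := by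
    rcases hsimple _ hIdeal with h | h
    · exfalso
      have : (a₀ * b₀ : A) ∈ Submodule.span K S := Submodule.subset_span ⟨a₀, b₀, rfl⟩
      rw [h, Submodule.mem_bot] at this
      exact hab this
    · exact h
  refine ⟨?_, ?_, ?_⟩
  · intro h
    have : a₀ * b₀ = 0 := by
      have := LinearMap.congr_fun h (a₀ * b₀)
      simpa using this
    exact hab this
  · intro χ ψ hχ hψ
    apply LinearMap.ext_on hspan
    rintro x ⟨a, b, rfl⟩
    show χ (ψ (a * b)) = ψ (χ (a * b))
    rw [(hψ a b).1, (hχ a (ψ b)).2, (hχ a b).2, (hψ (χ a) b).1]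
  · intro χ hχ hχ0
    have hkerI : IsAlgIdeal K A (LinearMap.ker χ) := by
      intro a x hx
      simp only [LinearMap.mem_ker] at hx ⊢
      exact ⟨by rw [(hχ a x).1, hx, mul_zero], by rw [(hχ x a).2, hx, zero_mul]⟩
    have hrangeI : IsAlgIdeal K A (LinearMap.range χ) := by
      rintro a x ⟨y, rfl⟩
      exact ⟨⟨a * y, (hχ a y).1⟩, ⟨y * a, (hχ y a).2⟩⟩
    have hker : LinearMap.ker χ = ⊥ := by
      rcases hsimple (LinearMap.ker χ) hkerI with h | h
      · exact h
      · exfalso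
        apply hχ0
        ext x
        have : x ∈ LinearMap.ker χ := h ▸ Submodule.mem_top
        simpa using this
    have hrange : LinearMap.range χ = ⊤ := by
      rcases hsimple (LinearMap.range χ) hrangeI with h | h
      · exfalso
        apply hχ0
        ext x
        have : χ x ∈ LinearMap.range χ := ⟨x, rfl⟩
        rw [h, Submodule.mem_bot] at this
        simpa using this
      · exact h
    have hbij : Function.Bijective χ := by
      constructor
      · rw [← LinearMap.ker_eq_bot]; exact hker
      · rw [← LinearMap.range_eq_top]; exact hrange
    let e := LinearEquiv.ofBijective χ hbij
    refine ⟨e.symm.toLinearMap, ?_, ?_, ?_⟩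
    · intro a b
      have hinj := hbij.1
      constructor
      · apply hinj
        have h1 : χ (e.symm.toLinearMap (a * b)) = a * b := e.apply_symm_apply (a * b)
        rw [h1, (hχ a (e.symm.toLinearMap b)).1]
        have h2 : χ (e.symm.toLinearMap b) = b := e.apply_symm_apply b
        rw [h2]
      · apply hinj
        have h1 : χ (e.symm.toLinearMap (a * b)) = a * b := e.apply_symm_apply (a * b)
        rw [h1, (hχ (e.symm.toLinearMap a) b).2]
        have h2 : χ (e.symm.toLinearMap a) = a := e.apply_symm_apply a
        rw [h2]
    · ext x; exact e.apply_symm_apply x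
    · ext x; exact e.symm_apply_apply x
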